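/- Subject reduction for closed terms: if ⊢ t : A and t ↦* u under call-by-name reduction, then ⊢ u : A. -/

import Mathlib

/-- Types of the guarded lambda calculus:
`A ::= α | N | 1 | A×A | 0 | A+A | A→A | μα.A | ▶A | ■A`
(with named type variables; `■A` is only formed for closed `A`). -/
inductive GTy : Type
  | var (x : ℕ)
  | natT
  | unitT
  | emptyT
  | prod (A B : GTy)
  | sum (A B : GTy)
  | arrow (A B : GTy)
  | mu (x : ℕ) (A : GTy)
  | later (A : GTy)
  | box (A : GTy)

/-- Substitution `A[B/α]` of `B` for the free occurrences of variable `α` in `A`.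
Since `■C` is only formed for closed `C`, substitution does not proceed under `■`. -/
def GTy.subst : GTy → GTy → ℕ → GTy
  | .var y, B, a => if y = a then B else .var y
  | .natT, _, _ => .natT
  | .unitT, _, _ => .unitT
  | .emptyT, _, _ => .emptyT
  | .prod A1 A2, B, a => .prod (A1.subst B a) (A2.subst B a)
  | .sum A1 A2, B, a => .sum (A1.subst B a) (A2.subst B a)
  | .arrow A1 A2, B, a => .arrow (A1.subst B a) (A2.subst B a)
  | .mu x A, B, a => if x = a then .mu x A else .mu x (A.subst B a)
  | .later A, B, a => .later (A.subst B a)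
  | .box A, _, _ => .box A

/-- Terms of the guarded lambda calculus, with named variables.  Explicit
substitutions `σ` (attached to `prev` and `box`) are lists of (variable, term)
pairs. -/
inductive Tm : Type
  | var (x : ℕ)
  | zero
  | succ (t : Tm)
  | unit
  | pair (t u : Tm)
  | fst (t : Tm)
  | snd (t : Tm)
  | abort (t : Tm)
  | inl (t : Tm)
  | inr (t : Tm)
  | case (t : Tm) (x1 : ℕ) (t1 : Tm) (x2 : ℕ) (t2 : Tm)
  | lam (x : ℕ) (t : Tm)
  | app (t u : Tm)
  | fold (t : Tm)
  | unfold (t : Tm)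
  | next (t : Tm)
  | prev (s : List (ℕ × Tm)) (t : Tm)
  | ap (t u : Tm)
  | box (s : List (ℕ × Tm)) (t : Tm)
  | unbox (t : Tm)

/-- Simultaneous substitution of an environment `r` (a partial map from variables
to terms) into a term.  `prev[x⃗←t⃗].t` and `box[x⃗←t⃗].t` bind all the variables
`x⃗` in `t` (but not in `t⃗`), so substitution acts only on the attached explicit
substitution. -/
def Tm.msubst (r : ℕ → Option Tm) : Tm → Tm
  | .var x => (r x).getD (.var x)
  | .zero => .zero
  | .succ t => .succ (t.msubst r)
  | .unit => .unit
  | .pair t u => .pair (t.msubst r) (u.msubst r)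
  | .fst t => .fst (t.msubst r)
  | .snd t => .snd (t.msubst r)
  | .abort t => .abort (t.msubst r)
  | .inl t => .inl (t.msubst r)
  | .inr t => .inr (t.msubst r)
  | .case t x1 t1 x2 t2 =>
      .case (t.msubst r)
        x1 (t1.msubst (fun y => if y = x1 then none else r y))
        x2 (t2.msubst (fun y => if y = x2 then none else r y))
  | .lam x t => .lam x (t.msubst (fun y => if y = x then none else r y))
  | .app t u => .app (t.msubst r) (u.msubst r)
  | .fold t => .fold (t.msubst r)
  | .unfold t => .unfold (t.msubst r)
  | .next t => .next (t.msubst r)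
  | .prev s t => .prev (s.attach.map (fun p => (p.1.1, p.1.2.msubst r))) t
  | .ap t u => .ap (t.msubst r) (u.msubst r)
  | .box s t => .box (s.attach.map (fun p => (p.1.1, p.1.2.msubst r))) t
  | .unbox t => .unbox (t.msubst r)
termination_by t => sizeOf t
decreasing_by
  all_goals simp_wf
  all_goals try omega
  all_goals
    obtain ⟨⟨a, b⟩, hp⟩ := p
  all_goals
    have := List.sizeOf_lt_of_mem hp
  all_goals
    simp at this ⊢
  all_goals omega

/-- Single substitution `t[u/x]`. -/
def Tm.sub1 (t u : Tm) (x : ℕ) : Tm :=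
  t.msubst (fun y => if y = x then some u else none)

/-- Simultaneous substitution `t[t⃗/x⃗]` induced by an explicit substitution. -/
def Tm.subList (s : List (ℕ × Tm)) (t : Tm) : Tm :=
  t.msubst (fun y => (s.find? (fun p => p.1 = y)).map Prod.snd)

/-- Numerals `succⁿ zero`. -/
inductive IsNumeral : Tm → Prop
  | zero : IsNumeral .zero
  | succ {t : Tm} : IsNumeral t → IsNumeral (.succ t)

/-- Values of the guarded lambda calculus. -/
inductive IsValue : Tm → Prop
  | num {t : Tm} : IsNumeral t → IsValue t
  | unit : IsValue .unit
  | pair (t u : Tm) : IsValue (.pair t u)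
  | inl (t : Tm) : IsValue (.inl t)
  | inr (t : Tm) : IsValue (.inr t)
  | lam (x : ℕ) (t : Tm) : IsValue (.lam x t)
  | fold (t : Tm) : IsValue (.fold t)
  | next (t : Tm) : IsValue (.next t)
  | box (s : List (ℕ × Tm)) (t : Tm) : IsValue (.box s t)

/-- The basic reduction rules of the guarded lambda calculus. -/
inductive HeadRed : Tm → Tm → Prop
  | fstR (t1 t2 : Tm) : HeadRed (.fst (.pair t1 t2)) t1
  | sndR (t1 t2 : Tm) : HeadRed (.snd (.pair t1 t2)) t2
  | caseL (t : Tm) (x1 : ℕ) (t1 : Tm) (x2 : ℕ) (t2 : Tm) :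
      HeadRed (.case (.inl t) x1 t1 x2 t2) (t1.sub1 t x1)
  | caseR (t : Tm) (x1 : ℕ) (t1 : Tm) (x2 : ℕ) (t2 : Tm) :
      HeadRed (.case (.inr t) x1 t1 x2 t2) (t2.sub1 t x2)
  | beta (x : ℕ) (t1 t2 : Tm) : HeadRed (.app (.lam x t1) t2) (t1.sub1 t2 x)
  | unfoldFold (t : Tm) : HeadRed (.unfold (.fold t)) t
  | prevSub (s : List (ℕ × Tm)) (t : Tm) (hs : s ≠ []) :
      HeadRed (.prev s t) (.prev [] (Tm.subList s t))
  | prevNext (t : Tm) : HeadRed (.prev [] (.next t)) t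
  | apNext (t1 t2 : Tm) : HeadRed (.ap (.next t1) (.next t2)) (.next (.app t1 t2))
  | unboxBox (s : List (ℕ × Tm)) (t : Tm) :
      HeadRed (.unbox (.box s t)) (Tm.subList s t)

/-- Evaluation contexts.  In `v ⊛ E` the left component must be a value. -/
inductive Ctx : Type
  | hole
  | succC (E : Ctx)
  | fstC (E : Ctx)
  | sndC (E : Ctx)
  | caseC (E : Ctx) (x1 : ℕ) (t1 : Tm) (x2 : ℕ) (t2 : Tm)
  | appC (E : Ctx) (u : Tm)
  | unfoldC (E : Ctx)
  | prevC (E : Ctx)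
  | apL (E : Ctx) (u : Tm)
  | apV (v : Tm) (hv : IsValue v) (E : Ctx)
  | unboxC (E : Ctx)

/-- Plugging a term into an evaluation context. -/
def Ctx.plug : Ctx → Tm → Tm
  | .hole, t => t
  | .succC E, t => .succ (E.plug t)
  | .fstC E, t => .fst (E.plug t)
  | .sndC E, t => .snd (E.plug t)
  | .caseC E x1 t1 x2 t2, t => .case (E.plug t) x1 t1 x2 t2
  | .appC E u, t => .app (E.plug t) u
  | .unfoldC E, t => .unfold (E.plug t)
  | .prevC E, t => .prev [] (E.plug t)
  | .apL E u, t => .ap (E.plug t) u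
  | .apV v _ E, t => .ap v (E.plug t)
  | .unboxC E, t => .unbox (E.plug t)

/-- Call-by-name reduction: `E[t] ↦ E[u]` for a reduction rule `t ↦ u` and an
evaluation context `E`. -/
def Step (a b : Tm) : Prop :=
  ∃ (E : Ctx) (t u : Tm), HeadRed t u ∧ a = E.plug t ∧ b = E.plug u


/-- A type is constant if all occurrences of `▶` in its syntax tree lie beneath an
occurrence of `■`. -/
def GTy.isConstant : GTy → Prop
  | .var _ => True
  | .natT => True
  | .unitT => True
  | .emptyT => True
  | .prod A1 A2 => A1.isConstant ∧ A2.isConstant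
  | .sum A1 A2 => A1.isConstant ∧ A2.isConstant
  | .arrow A1 A2 => A1.isConstant ∧ A2.isConstant
  | .mu _ A => A.isConstant
  | .later _ => False
  | .box _ => True

/-- Lookup of a variable in a typing context (most recent binding first). -/
def lookupCtx : List (ℕ × GTy) → ℕ → Option GTy
  | [], _ => none
  | (y, A) :: G, x => if x = y then some A else lookupCtx G x

/-- Typing judgment `Γ ⊢ t : A` of the guarded lambda calculus. -/
inductive Typing : List (ℕ × GTy) → Tm → GTy → Prop
  | var {G x A} : lookupCtx G x = some A → Typing G (.var x) A
  | zero {G} : Typing G .zero .natT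
  | succ {G t} : Typing G t .natT → Typing G (.succ t) .natT
  | unit {G} : Typing G .unit .unitT
  | pair {G t u A B} : Typing G t A → Typing G u B → Typing G (.pair t u) (.prod A B)
  | fst {G t A B} : Typing G t (.prod A B) → Typing G (.fst t) A
  | snd {G t A B} : Typing G t (.prod A B) → Typing G (.snd t) B
  | abort {G t A} : Typing G t .emptyT → Typing G (.abort t) A
  | inl {G t A B} : Typing G t A → Typing G (.inl t) (.sum A B)
  | inr {G t A B} : Typing G t B → Typing G (.inr t) (.sum A B)
  | case {G t x1 t1 x2 t2 A B C} :
      Typing G t (.sum A B) →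
      Typing ((x1, A) :: G) t1 C →
      Typing ((x2, B) :: G) t2 C →
      Typing G (.case t x1 t1 x2 t2) C
  | lam {G x t A B} :
      Typing ((x, A) :: G) t B → Typing G (.lam x t) (.arrow A B)
  | app {G t u A B} :
      Typing G t (.arrow A B) → Typing G u A → Typing G (.app t u) B
  | fold {G t a A} :
      Typing G t (A.subst (.mu a A) a) → Typing G (.fold t) (.mu a A)
  | unfold {G t a A} :
      Typing G t (.mu a A) → Typing G (.unfold t) (A.subst (.mu a A) a)
  | next {G t A} : Typing G t A → Typing G (.next t) (.later A)
  | ap {G t u A B} :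
      Typing G t (.later (.arrow A B)) → Typing G u (.later A) →
      Typing G (.ap t u) (.later B)
  | prev {G} {s : List (ℕ × Tm)} {As : List GTy} {t A} :
      s.length = As.length →
      (∀ B ∈ As, B.isConstant) →
      (∀ q ∈ List.zip s As, Typing G q.1.2 q.2) →
      Typing (List.zip (s.map Prod.fst) As) t (.later A) →
      Typing G (.prev s t) A
  | box {G} {s : List (ℕ × Tm)} {As : List GTy} {t A} :
      s.length = As.length →
      (∀ B ∈ As, B.isConstant) →
      (∀ q ∈ List.zip s As, Typing G q.1.2 q.2) →
      Typing (List.zip (s.map Prod.fst) As) t A →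
      Typing G (.box s t) (.box A)
  | unbox {G t A} : Typing G t (.box A) → Typing G (.unbox t) A
/-! ### Auxiliary lemmas -/

lemma lookupCtx_append {G D : List (ℕ × GTy)} {x A} (h : lookupCtx G x = some A) :
    lookupCtx (G ++ D) x = some A := by
  induction G with
  | nil => simp [lookupCtx] at h
  | cons p G ih =>
    obtain ⟨y, B⟩ := p
    simp only [lookupCtx, List.cons_append] at *
    split at h
    · next he => rw [if_pos he]; exact h
    · next he => rw [if_neg he]; exact ih h

lemma Typing.weaken {G t A} (h : Typing G t A) (D : List (ℕ × GTy)) :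
    Typing (G ++ D) t A := by
  induction h generalizing D with
  | var hx => exact Typing.var (lookupCtx_append hx)
  | zero => exact Typing.zero
  | succ _ ih => exact Typing.succ (ih D)
  | unit => exact Typing.unit
  | pair _ _ ih1 ih2 => exact Typing.pair (ih1 D) (ih2 D)
  | fst _ ih => exact Typing.fst (ih D)
  | snd _ ih => exact Typing.snd (ih D)
  | abort _ ih => exact Typing.abort (ih D)
  | inl _ ih => exact Typing.inl (ih D)
  | inr _ ih => exact Typing.inr (ih D)
  | case _ _ _ ih ih1 ih2 => exact Typing.case (ih D) (ih1 D) (ih2 D)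
  | lam _ ih => exact Typing.lam (ih D)
  | app _ _ ih1 ih2 => exact Typing.app (ih1 D) (ih2 D)
  | fold _ ih => exact Typing.fold (ih D)
  | unfold _ ih => exact Typing.unfold (ih D)
  | next _ ih => exact Typing.next (ih D)
  | ap _ _ ih1 ih2 => exact Typing.ap (ih1 D) (ih2 D)
  | prev hl hc _ ht ihs _ =>
      exact Typing.prev hl hc (fun q hq => ihs q hq D) ht
  | box hl hc _ ht ihs _ =>
      exact Typing.box hl hc (fun q hq => ihs q hq D) ht
  | unbox _ ih => exact Typing.unbox (ih D)

lemma Typing.weaken0 {t A} (h : Typing [] t A) (D : List (ℕ × GTy)) :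
    Typing D t A := h.weaken D

lemma attach_map_pair (s : List (ℕ × Tm)) (r : ℕ → Option Tm) :
    s.attach.map (fun p => (p.1.1, p.1.2.msubst r)) =
      s.map (fun p => (p.1, p.2.msubst r)) := by
  rw [List.map_attach_eq_pmap]
  simp

/-- The main substitution lemma. -/
lemma msubst_typing {G t A} (h : Typing G t A) :
    ∀ {D : List (ℕ × GTy)} (r : ℕ → Option Tm),
      (∀ x B, lookupCtx G x = some B →
        (∃ u, r x = some u ∧ Typing [] u B) ∨ (r x = none ∧ lookupCtx D x = some B)) →
      Typing D (t.msubst r) A := by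
  induction h with
  | @var G x A hx =>
      intro D r hr
      simp only [Tm.msubst]
      rcases hr x A hx with ⟨u, hu, htu⟩ | ⟨hn, hl⟩
      · simpa [hu] using htu.weaken0 D
      · simpa [hn] using Typing.var hl
  | zero => intro D r hr; simp only [Tm.msubst]; exact Typing.zero
  | succ _ ih => intro D r hr; simp only [Tm.msubst]; exact Typing.succ (ih r hr)
  | unit => intro D r hr; simp only [Tm.msubst]; exact Typing.unit
  | pair _ _ ih1 ih2 => intro D r hr; simp only [Tm.msubst]; exact Typing.pair (ih1 r hr) (ih2 r hr)
  | fst _ ih => intro D r hr; simp only [Tm.msubst]; exact Typing.fst (ih r hr)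
  | snd _ ih => intro D r hr; simp only [Tm.msubst]; exact Typing.snd (ih r hr)
  | abort _ ih => intro D r hr; simp only [Tm.msubst]; exact Typing.abort (ih r hr)
  | inl _ ih => intro D r hr; simp only [Tm.msubst]; exact Typing.inl (ih r hr)
  | inr _ ih => intro D r hr; simp only [Tm.msubst]; exact Typing.inr (ih r hr)
  | @case G tt x1 t1 x2 t2 A B C _ _ _ ih ih1 ih2 =>
      intro D r hr
      simp only [Tm.msubst]
      refine Typing.case (ih r hr) (ih1 _ ?_) (ih2 _ ?_)
      · intro y B' hy
        simp only [lookupCtx] at hy ⊢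
        split at hy
        · right; simp_all [lookupCtx]
        · next hne =>
          rcases hr y B' hy with h1 | ⟨hn, hl⟩
          · left; simpa [hne] using h1
          · right; simp [hne, hn, lookupCtx, hl]
      · intro y B' hy
        simp only [lookupCtx] at hy ⊢
        split at hy
        · right; simp_all [lookupCtx]
        · next hne =>
          rcases hr y B' hy with h1 | ⟨hn, hl⟩
          · left; simpa [hne] using h1
          · right; simp [hne, hn, lookupCtx, hl]
  | @lam G x tt A B _ ih =>
      intro D r hr
      simp only [Tm.msubst]
      refine Typing.lam (ih _ ?_)
      intro y B' hy
      simp only [lookupCtx] at hy ⊢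
      split at hy
      · right; simp_all [lookupCtx]
      · next hne =>
        rcases hr y B' hy with h1 | ⟨hn, hl⟩
        · left; simpa [hne] using h1
        · right; simp [hne, hn, lookupCtx, hl]
  | app _ _ ih1 ih2 => intro D r hr; simp only [Tm.msubst]; exact Typing.app (ih1 r hr) (ih2 r hr)
  | fold _ ih => intro D r hr; simp only [Tm.msubst]; exact Typing.fold (ih r hr)
  | unfold _ ih => intro D r hr; simp only [Tm.msubst]; exact Typing.unfold (ih r hr)
  | next _ ih => intro D r hr; simp only [Tm.msubst]; exact Typing.next (ih r hr)
  | ap _ _ ih1 ih2 => intro D r hr; simp only [Tm.msubst]; exact Typing.ap (ih1 r hr) (ih2 r hr)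
  | @prev G s As tt A hl hc hts ht ihs _ =>
      intro D r hr
      rw [show Tm.msubst r (.prev s tt) = .prev (s.attach.map (fun p => (p.1.1, p.1.2.msubst r))) tt from by simp [Tm.msubst]]
      rw [attach_map_pair]
      refine Typing.prev (As := As) (by simpa using hl) hc ?_ ?_
      · intro q hq
        rw [List.zip_map_left] at hq
        simp only [List.mem_map] at hq
        obtain ⟨q0, hq0, rfl⟩ := hq
        exact ihs q0 hq0 r hr
      · simpa [Function.comp_def] using ht
  | @box G s As tt A hl hc hts ht ihs _ =>
      intro D r hr
      rw [show Tm.msubst r (.box s tt) = .box (s.attach.map (fun p => (p.1.1, p.1.2.msubst r))) tt from by simp [Tm.msubst]]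
      rw [attach_map_pair]
      refine Typing.box (As := As) (by simpa using hl) hc ?_ ?_
      · intro q hq
        rw [List.zip_map_left] at hq
        simp only [List.mem_map] at hq
        obtain ⟨q0, hq0, rfl⟩ := hq
        exact ihs q0 hq0 r hr
      · simpa [Function.comp_def] using ht
  | unbox _ ih => intro D r hr; simp only [Tm.msubst]; exact Typing.unbox (ih r hr)

lemma find_of_lookup :
    ∀ (s : List (ℕ × Tm)) (As : List GTy), s.length = As.length →
    (∀ q ∈ List.zip s As, Typing [] q.1.2 q.2) →
    ∀ x C, lookupCtx (List.zip (s.map Prod.fst) As) x = some C →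
    ∃ u, ((s.find? (fun p => p.1 = x)).map Prod.snd) = some u ∧ Typing [] u C := by
  intro s
  induction s with
  | nil => intro As _ _ x C h; simp [lookupCtx] at h
  | cons p s ih =>
      obtain ⟨y, v⟩ := p
      intro As hl hts x C hx
      cases As with
      | nil => simp at hl
      | cons B0 As =>
        simp only [List.map_cons, List.zip_cons_cons, lookupCtx] at hx
        by_cases hxy : x = y
        · subst hxy
          rw [if_pos rfl] at hx
          injection hx with hx
          subst hx
          refine ⟨v, ?_, hts ((x, v), B0) (by simp)⟩
          simp [List.find?]
        · rw [if_neg hxy] at hx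
          obtain ⟨u, hu, htu⟩ := ih As (by simpa using hl)
            (fun q hq => hts q (by simp [hq])) x C hx
          refine ⟨u, ?_, htu⟩
          rw [List.find?_cons_of_neg]
          · exact hu
          · simpa using fun h => hxy h.symm

lemma subList_typing {s : List (ℕ × Tm)} {As : List GTy} {t : Tm} {B : GTy}
    (hl : s.length = As.length)
    (hts : ∀ q ∈ List.zip s As, Typing [] q.1.2 q.2)
    (ht : Typing (List.zip (s.map Prod.fst) As) t B) :
    Typing [] (Tm.subList s t) B := by
  apply msubst_typing ht
  intro x C hx
  left
  exact find_of_lookup s As hl hts x C hx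

lemma sub1_typing {x : ℕ} {t u : Tm} {A B : GTy}
    (ht : Typing [(x, A)] t B) (hu : Typing [] u A) :
    Typing [] (t.sub1 u x) B := by
  apply msubst_typing ht
  intro y C hy
  simp only [lookupCtx] at hy
  split at hy
  · next h => subst h; left; exact ⟨u, by simp_all⟩
  · simp at hy

lemma head_preserve {t u : Tm} (h : HeadRed t u) {A : GTy}
    (ht : Typing [] t A) : Typing [] u A := by
  cases h with
  | fstR t1 t2 => cases ht with | fst h => cases h with | pair h1 h2 => exact h1
  | sndR t1 t2 => cases ht with | snd h => cases h with | pair h1 h2 => exact h2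
  | caseL t x1 t1 x2 t2 =>
      cases ht with | case h h1 h2 =>
        cases h with | inl h => exact sub1_typing h1 h
  | caseR t x1 t1 x2 t2 =>
      cases ht with | case h h1 h2 =>
        cases h with | inr h => exact sub1_typing h2 h
  | beta x t1 t2 =>
      cases ht with | app h hu =>
        cases h with | lam h => exact sub1_typing h hu
  | unfoldFold t =>
      cases ht with | unfold h => cases h with | fold h => exact h
  | prevSub s t hs =>
      cases ht with | prev hl hc hts ht =>
        refine Typing.prev (As := []) rfl (by simp) (by simp) ?_
        simpa using subList_typing hl hts ht
  | prevNext t =>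
      cases ht with | @prev _ _ As _ _ hl hc hts ht =>
        have : As = [] := by
          cases As with
          | nil => rfl
          | cons B As => simp at hl
        subst this
        simp only [List.map_nil, List.zip_nil_left] at ht
        cases ht with | next h => exact h
  | apNext t1 t2 =>
      cases ht with | ap h1 h2 =>
        cases h1 with | next h1 =>
          cases h2 with | next h2 =>
            exact Typing.next (Typing.app h1 h2)
  | unboxBox s t =>
      cases ht with | unbox h =>
        cases h with | box hl hc hts ht => exact subList_typing hl hts ht

lemma plug_preserve (E : Ctx) {t u : Tm} (h : HeadRed t u) :
    ∀ {A : GTy}, Typing [] (E.plug t) A → Typing [] (E.plug u) A := by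
  induction E with
  | hole => intro A hA; exact head_preserve h hA
  | succC E ih =>
      intro A hA
      cases hA with | succ hA => exact Typing.succ (ih hA)
  | fstC E ih =>
      intro A hA
      cases hA with | fst hA => exact Typing.fst (ih hA)
  | sndC E ih =>
      intro A hA
      cases hA with | snd hA => exact Typing.snd (ih hA)
  | caseC E x1 t1 x2 t2 ih =>
      intro A hA
      cases hA with | case hA h1 h2 => exact Typing.case (ih hA) h1 h2
  | appC E u' ih =>
      intro A hA
      cases hA with | app hA hu => exact Typing.app (ih hA) hu
  | unfoldC E ih =>
      intro A hA
      cases hA with | unfold hA => exact Typing.unfold (ih hA)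
  | prevC E ih =>
      intro A hA
      cases hA with | @prev _ _ As _ _ hl hc hts hA =>
        have : As = [] := by
          cases As with
          | nil => rfl
          | cons B As => simp at hl
        subst this
        simp only [List.map_nil, List.zip_nil_left] at hA
        refine Typing.prev (As := []) rfl (by simp) (by simp) ?_
        exact ih hA
  | apL E u' ih =>
      intro A hA
      cases hA with | ap hA hu => exact Typing.ap (ih hA) hu
  | apV v hv E ih =>
      intro A hA
      cases hA with | ap hv' hA => exact Typing.ap hv' (ih hA)
  | unboxC E ih =>
      intro A hA
      cases hA with | unbox hA => exact Typing.unbox (ih hA)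

lemma step_preserve {t u : Tm} (h : Step t u) {A : GTy}
    (ht : Typing [] t A) : Typing [] u A := by
  obtain ⟨E, t0, u0, hred, rfl, rfl⟩ := h
  exact plug_preserve E hred ht
/-- Subject reduction for closed terms: if `⊢ t : A` and `t ↦* u` under
call-by-name reduction, then `⊢ u : A`. -/
theorem subject_reduction_closed (t u : Tm) (A : GTy)
    (ht : Typing [] t A) (hred : Relation.ReflTransGen Step t u) :
    Typing [] u A := by
  induction hred with
  | refl => exact ht
  | tail _ hstep ih => exact step_preserve hstep ih
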